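/- In the free pseudosolution setup, for every subspace A' with B ⊆ A' ⊆ A, the preimage under f̃ : ⋀²A → ⋀²(A+f(A)) of ⋀²(A+f(A')) equals ⋀²A'; that is, for e ∈ ⋀²A one has f̃(e) ∈ ⋀²(A+f(A')) if and only if e ∈ ⋀²A'. Consequently, if e₁, …, e_t ∈ ⋀²A are linearly independent modulo ⋀²A', then f̃(e₁), …, f̃(e_t) are linearly independent modulo ⋀²(A+f(A')). -/

import Mathlib

/-!
Common notions: for a subspace `A` of an ambient `K`-vector space `M`, `wedge2 K A` is the
image of the exterior square `⋀² A` inside the exterior algebra of `M` (the span of the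
products `a ∧ b` for `a, b ∈ A`).  For subspaces `C`, `B`, `fdim K C B` (resp. `cdim K C B`)
is the dimension of `B` over `C`, i.e. of the quotient `B / (C ∩ B)`, as a natural number
(resp. as a cardinal), and `FinOver K C B` says that `B` is finite-dimensional over `C`.
Relative to a fixed subspace `N` of `⋀² M`, writing `N(X) := N ⊓ wedge2 K X`,
`pdim K N C B` is the relative predimension `δ(B/C) = dim(B/C) - dim(N(B)/N(C))` and
`pdim0 K N A = δ(A) = dim A - dim N(A)`.  `Strong K N B A` says that `B` is strong
(self-sufficient) in `A`:  `δ(C/B) ≥ 0` (stated in the equivalent subtraction-free form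
`dim(N(C)/N(B)) ≤ dim(C/B)`) for every intermediate subspace `C` finite-dimensional over
`B`; `MinStrong K N B A` says that `A` is a minimal strong extension of `B`.
-/

noncomputable section

universe u v

variable (K : Type u) [Field K] {M : Type v} [AddCommGroup M] [Module K M]

/-- The image of the exterior square `⋀² A` of a subspace `A` inside the exterior algebra
of the ambient space. -/
def wedge2 (A : Submodule K M) : Submodule K (ExteriorAlgebra K M) :=
  Submodule.span K
    {z | ∃ a ∈ A, ∃ b ∈ A, z = ExteriorAlgebra.ι K a * ExteriorAlgebra.ι K b}

/-- The relative dimension `dim (B / C)`, as a natural number. -/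
def fdim (C B : Submodule K M) : ℕ :=
  Module.finrank K (↥B ⧸ Submodule.comap B.subtype C)

/-- The relative dimension `dim (B / C)`, as a cardinal. -/
def cdim (C B : Submodule K M) : Cardinal :=
  Module.rank K (↥B ⧸ Submodule.comap B.subtype C)

/-- `B` is finite-dimensional over `C`. -/
def FinOver (C B : Submodule K M) : Prop :=
  Module.Finite K (↥B ⧸ Submodule.comap B.subtype C)

/-- The relative predimension `δ(B/C) = dim(B/C) - dim(N(B)/N(C))` with respect to `N`. -/
def pdim (N : Submodule K (ExteriorAlgebra K M)) (C B : Submodule K M) : ℤ :=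
  (fdim K C B : ℤ) - (fdim K (N ⊓ wedge2 K C) (N ⊓ wedge2 K B) : ℤ)

/-- The predimension `δ(A) = dim A - dim N(A)` with respect to `N`. -/
def pdim0 (N : Submodule K (ExteriorAlgebra K M)) (A : Submodule K M) : ℤ :=
  (Module.finrank K ↥A : ℤ) - (Module.finrank K ↥(N ⊓ wedge2 K A) : ℤ)

/-- `B` is strong (self-sufficient) in `A` with respect to `N`. -/
def Strong (N : Submodule K (ExteriorAlgebra K M)) (B A : Submodule K M) : Prop :=
  B ≤ A ∧ ∀ C : Submodule K M, B ≤ C → C ≤ A → FinOver K B C →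
    cdim K (N ⊓ wedge2 K B) (N ⊓ wedge2 K C) ≤ Cardinal.lift.{u} (cdim K B C)

/-- `A` is a minimal strong extension of `B` with respect to `N`. -/
def MinStrong (N : Submodule K (ExteriorAlgebra K M)) (B A : Submodule K M) : Prop :=
  Strong K N B A ∧ B < A ∧ ∀ C : Submodule K M, B < C → C < A → ¬ Strong K N C A



section st0aux
variable {K : Type u} [Field K] {W : Type v} [AddCommGroup W] [Module K W]

open ExteriorAlgebra

lemma st0_mem_wedge2 {P : Submodule K W} {x y : W} (hx : x ∈ P) (hy : y ∈ P) :
    ι K x * ι K y ∈ wedge2 K P :=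
  Submodule.subset_span ⟨x, hx, y, hy, rfl⟩

lemma st0_swap (u w : W) : ι K u * ι K w = -(ι K w * ι K u) :=
  eq_neg_of_add_eq_zero_left (ι_add_mul_swap u w)

lemma st0_apply_mem {P : Submodule K W} (g : ExteriorAlgebra K W →ₗ[K] ExteriorAlgebra K W)
    (N : Submodule K (ExteriorAlgebra K W))
    (h : ∀ x ∈ P, ∀ y ∈ P, g (ι K x * ι K y) ∈ N) :
    ∀ e ∈ wedge2 K P, g e ∈ N := by
  intro e he
  induction he using Submodule.span_induction with
  | mem x hx => obtain ⟨a, ha, b, hb, rfl⟩ := hx; exact h a ha b hb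
  | zero => simpa using N.zero_mem
  | add x y _ _ hx hy => simpa using N.add_mem hx hy
  | smul c x _ hx => simpa using N.smul_mem c hx

lemma st0_contract_ι_mul_ι (lam : Module.Dual K W) (x y : W) :
    CliffordAlgebra.contractLeft (Q := (0 : QuadraticForm K W)) lam (ι K x * ι K y)
      = ι K (lam x • y - lam y • x) := by
  rw [CliffordAlgebra.contractLeft_ι_mul, CliffordAlgebra.contractLeft_ι,
    Algebra.algebraMap_eq_smul_one, mul_smul_comm, mul_one, map_sub, map_smul, map_smul]

lemma st0_contract_vanish {S : Submodule K W} (lam : Module.Dual K W)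
    (h : ∀ s ∈ S, lam s = 0) :
    ∀ e ∈ wedge2 K S,
      CliffordAlgebra.contractLeft (Q := (0 : QuadraticForm K W)) lam e = 0 := by
  intro e he
  have := st0_apply_mem (P := S)
    (CliffordAlgebra.contractLeft (Q := (0 : QuadraticForm K W)) lam) ⊥ ?_ e he
  · simpa using this
  · intro x hx y hy
    rw [st0_contract_ι_mul_ι, h x hx, h y hy]
    simp

lemma st0_exists_dual (S : Submodule K W) {n : ℕ} (v : Fin n → W)
    (hv : ∀ co : Fin n → K, (∑ j, co j • v j) ∈ S → ∀ j, co j = 0) :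
    ∃ lam : Fin n → Module.Dual K W,
      (∀ k, ∀ s ∈ S, lam k s = 0) ∧ ∀ k j, lam k (v j) = if j = k then 1 else 0 := by
  have hli : LinearIndependent K (fun j => S.mkQ (v j)) := by
    rw [Fintype.linearIndependent_iff]
    intro co hco
    have h0 : S.mkQ (∑ j, co j • v j) = 0 := by
      simpa [map_sum, map_smul] using hco
    rw [Submodule.mkQ_apply, Submodule.Quotient.mk_eq_zero] at h0
    exact hv co h0
  set b := Module.Basis.span hli with hb
  have hext : ∀ k : Fin n, ∃ g : (W ⧸ S) →ₗ[K] K,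
      g.comp (Submodule.span K (Set.range fun j => S.mkQ (v j))).subtype = b.coord k :=
    fun k => LinearMap.exists_extend (b.coord k)
  choose g hg using hext
  refine ⟨fun k => (g k).comp S.mkQ, ?_, ?_⟩
  · intro k s hs
    have : S.mkQ s = 0 := by rwa [Submodule.mkQ_apply, Submodule.Quotient.mk_eq_zero]
    simp [this]
  · intro k j
    have hbj : (b j : W ⧸ S) = S.mkQ (v j) := congrArg Subtype.val (Module.Basis.span_apply hli j)
    have : g k (S.mkQ (v j)) = b.coord k (b j) := by
      rw [← hbj, ← hg k]; rfl
    simp only [LinearMap.comp_apply, this, Module.Basis.coord_apply, Module.Basis.repr_self]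
    rw [Finsupp.single_apply]

lemma st0_decomp {A A' : Submodule K W} (hA'A : A' ≤ A) {n : ℕ} (a : Fin n → W)
    (hdec : ∀ x ∈ A, ∃ x₀ ∈ A', ∃ c : Fin n → K, x = x₀ + ∑ j, c j • a j) :
    ∀ e ∈ wedge2 K A, ∃ e' ∈ wedge2 K A', ∃ z : Fin n → W,
      (∀ k, z k ∈ A) ∧ e = e' + ∑ k, ι K (a k) * ι K (z k) := by
  intro e he
  induction he using Submodule.span_induction with
  | mem w hw =>
    obtain ⟨x, hx, y, hy, rfl⟩ := hw
    obtain ⟨x₀, hx₀, c, hxeq⟩ := hdec x hx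
    obtain ⟨y₀, hy₀, d, hyeq⟩ := hdec y hy
    refine ⟨ι K x₀ * ι K y₀, st0_mem_wedge2 hx₀ hy₀, fun j => c j • y - d j • x₀,
      fun j => A.sub_mem (A.smul_mem _ hy) (A.smul_mem _ (hA'A hx₀)), ?_⟩
    have hx' : ι K x = ι K x₀ + ∑ j, c j • ι K (a j) := by
      rw [hxeq]; simp [map_sum]
    have hy' : ι K y = ι K y₀ + ∑ j, d j • ι K (a j) := by
      rw [hyeq]; simp [map_sum]
    have hterm : ∀ j : Fin n, ι K (a j) * ι K (c j • y - d j • x₀)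
        = c j • (ι K (a j) * ι K y) - d j • (ι K (a j) * ι K x₀) := fun j => by
      rw [map_sub, map_smul, map_smul, mul_sub, mul_smul_comm, mul_smul_comm]
    calc ι K x * ι K y
        = ι K x₀ * ι K y + ∑ j, c j • (ι K (a j) * ι K y) := by
          rw [hx', add_mul, Finset.sum_mul]
          simp [smul_mul_assoc]
      _ = (ι K x₀ * ι K y₀ - ∑ j, d j • (ι K (a j) * ι K x₀))
            + ∑ j, c j • (ι K (a j) * ι K y) := by
          congr 1
          rw [hy', mul_add, Finset.mul_sum, sub_eq_add_neg, ← Finset.sum_neg_distrib]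
          congr 1
          refine Finset.sum_congr rfl fun j _ => ?_
          rw [mul_smul_comm, st0_swap, smul_neg]
      _ = ι K x₀ * ι K y₀ + ∑ j, ι K (a j) * ι K (c j • y - d j • x₀) := by
          rw [Finset.sum_congr rfl fun j _ => hterm j, Finset.sum_sub_distrib]
          abel
  | zero => exact ⟨0, (wedge2 K A').zero_mem, fun _ => 0, fun _ => A.zero_mem, by simp⟩
  | add x y _ _ hx hy =>
    obtain ⟨e1, he1, z1, hz1, heq1⟩ := hx
    obtain ⟨e2, he2, z2, hz2, heq2⟩ := hy
    refine ⟨e1 + e2, (wedge2 K A').add_mem he1 he2, fun k => z1 k + z2 k,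
      fun k => A.add_mem (hz1 k) (hz2 k), ?_⟩
    rw [heq1, heq2]
    simp only [map_add, mul_add, Finset.sum_add_distrib]
    abel
  | smul r x _ hx =>
    obtain ⟨e1, he1, z1, hz1, heq1⟩ := hx
    refine ⟨r • e1, (wedge2 K A').smul_mem r he1, fun k => r • z1 k,
      fun k => A.smul_mem r (hz1 k), ?_⟩
    rw [heq1]
    simp only [map_smul, mul_smul_comm, smul_add, Finset.smul_sum]

lemma st0_sum_zero {n : ℕ} (C : Fin n → Fin n → K) (hsym : ∀ l k, C l k = C k l)
    (x : Fin n → W) : ∑ k, ∑ l, C l k • (ι K (x k) * ι K (x l)) = 0 := by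
  rw [← Finset.sum_product' (f := fun k l => C l k • (ι K (x k) * ι K (x l)))]
  refine Finset.sum_ninvolution Prod.swap ?_ ?_ (fun p => Finset.mem_univ _)
    (fun p => Prod.swap_swap p)
  · rintro ⟨k, l⟩
    show C l k • (ι K (x k) * ι K (x l)) + C k l • (ι K (x l) * ι K (x k)) = 0
    rw [hsym k l, ← smul_add, ι_add_mul_swap, smul_zero]
  · rintro ⟨k, l⟩ hp heq
    exfalso
    apply hp
    have hkl : l = k := (Prod.ext_iff.mp heq).1
    subst hkl
    show C l l • (ι K (x l) * ι K (x l)) = 0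
    rw [ι_sq_zero, smul_zero]

end st0aux

open ExteriorAlgebra in
/-- in the free pseudosolution setup, for every `B ⊆ A' ⊆ A` and every
`e ∈ ⋀²A`, one has `f̃ e ∈ ⋀²(A + f(A'))` iff `e ∈ ⋀²A'`; consequently families of
elements of `⋀²A` which are linearly independent modulo `⋀²A'` are sent by `f̃` to
families linearly independent modulo `⋀²(A + f(A'))`. -/
theorem statement0 {K : Type u} [Field K] {W : Type v} [AddCommGroup W] [Module K W]
    (V A B : Submodule K W) [FiniteDimensional K ↥A]
    (hBA : B ≤ A) (hAV : A ≤ V)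
    (f : W →ₗ[K] W) (hfB : ∀ b ∈ B, f b ∈ V)
    (hgen : ∀ a ∈ A, f a ∈ A ⊔ Submodule.map f B → a ∈ B)
    (F : ExteriorAlgebra K W →ₗ[K] ExteriorAlgebra K W)
    (hF : ∀ x y : W,
      F (ExteriorAlgebra.ι K x * ExteriorAlgebra.ι K y) =
        ExteriorAlgebra.ι K (f x) * ExteriorAlgebra.ι K y +
          ExteriorAlgebra.ι K x * ExteriorAlgebra.ι K (f y))
    (A' : Submodule K W) (hBA' : B ≤ A') (hA'A : A' ≤ A) :
    (∀ e ∈ wedge2 K A,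
        (F e ∈ wedge2 K (A ⊔ Submodule.map f A') ↔ e ∈ wedge2 K A')) ∧
    (∀ (t : ℕ) (e : Fin t → ExteriorAlgebra K W), (∀ i, e i ∈ wedge2 K A) →
      (∀ c : Fin t → K, (∑ i, c i • e i) ∈ wedge2 K A' → ∀ i, c i = 0) →
      (∀ c : Fin t → K, (∑ i, c i • F (e i)) ∈ wedge2 K (A ⊔ Submodule.map f A') →
        ∀ i, c i = 0)) := by
  classical
  set S := A ⊔ Submodule.map f A' with hSdef
  have hAS : A ≤ S := le_sup_left
  have hfA'S : Submodule.map f A' ≤ S := le_sup_right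
  -- a basis of A over A'
  set n := Module.finrank K (↥A ⧸ Submodule.comap A.subtype A') with hn
  let bQ : Module.Basis (Fin n) K (↥A ⧸ Submodule.comap A.subtype A') :=
    Module.finBasis K _
  have hsurj := Submodule.mkQ_surjective (Submodule.comap A.subtype A')
  choose aa haa using fun j => hsurj (bQ j)
  set a : Fin n → W := fun j => (aa j : W) with hadef
  have ha : ∀ j, a j ∈ A := fun j => (aa j).2
  have hdec : ∀ x ∈ A, ∃ x₀ ∈ A', ∃ c : Fin n → K, x = x₀ + ∑ j, c j • a j := by
    intro x hx
    set u : ↥A := ⟨x, hx⟩ with hu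
    set c : Fin n → K := fun j => bQ.repr ((Submodule.comap A.subtype A').mkQ u) j with hc
    have hmk : (Submodule.comap A.subtype A').mkQ (u - ∑ j, c j • aa j) = 0 := by
      rw [map_sub, map_sum]
      simp only [map_smul, haa]
      rw [sub_eq_zero]
      exact (bQ.sum_repr _).symm
    rw [Submodule.mkQ_apply, Submodule.Quotient.mk_eq_zero, Submodule.mem_comap] at hmk
    refine ⟨x - ∑ j, c j • a j, ?_, c, by abel⟩
    simpa [hadef] using hmk
  have hindep : ∀ co : Fin n → K, (∑ j, co j • a j) ∈ A' → ∀ j, co j = 0 := by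
    intro co hco
    have hmem : (∑ j, co j • aa j : ↥A) ∈ Submodule.comap A.subtype A' := by
      simpa [hadef] using hco
    have h0 : (Submodule.comap A.subtype A').mkQ (∑ j, co j • aa j) = 0 := by
      rwa [Submodule.mkQ_apply, Submodule.Quotient.mk_eq_zero]
    rw [map_sum] at h0
    simp only [map_smul, haa] at h0
    exact Fintype.linearIndependent_iff.mp bQ.linearIndependent co h0
  have hfaS : ∀ co : Fin n → K, (∑ j, co j • f (a j)) ∈ S → ∀ j, co j = 0 := by
    intro co hco
    have hxA : (∑ j, co j • a j) ∈ A := A.sum_mem fun j _ => A.smul_mem _ (ha j)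
    have hfx : f (∑ j, co j • a j) ∈ S := by
      rw [map_sum]; simpa only [map_smul] using hco
    rw [hSdef, Submodule.mem_sup] at hfx
    obtain ⟨uu, huu, ww, hww, heq⟩ := hfx
    obtain ⟨a', ha', rfl⟩ := hww
    have hB : (∑ j, co j • a j) - a' ∈ B := by
      refine hgen _ (A.sub_mem hxA (hA'A ha')) ?_
      have huu' : f (∑ j, co j • a j) - f a' = uu := by rw [← heq]; abel
      rw [map_sub, huu']
      exact Submodule.mem_sup_left huu
    have : (∑ j, co j • a j) ∈ A' := by
      have := A'.add_mem (hBA' hB) ha'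
      simpa using this
    exact hindep co this
  obtain ⟨lam, hlamS, hlamv⟩ := st0_exists_dual S (fun j => f (a j)) hfaS
  have hFwedge : ∀ e ∈ wedge2 K A', F e ∈ wedge2 K S := by
    refine st0_apply_mem F (wedge2 K S) fun x hx y hy => ?_
    rw [hF]
    exact (wedge2 K S).add_mem
      (st0_mem_wedge2 (hfA'S (Submodule.mem_map_of_mem hx)) (hAS (hA'A hy)))
      (st0_mem_wedge2 (hAS (hA'A hx)) (hfA'S (Submodule.mem_map_of_mem hy)))
  have hard : ∀ e ∈ wedge2 K A, F e ∈ wedge2 K S → e ∈ wedge2 K A' := by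
    intro e he hFe
    obtain ⟨e', he', z, hz, heq⟩ := st0_decomp hA'A a hdec e he
    have hz' : ∀ k, z k = ∑ l, lam k (f (z l)) • a l := by
      intro k
      have h1 : CliffordAlgebra.contractLeft (Q := (0 : QuadraticForm K W)) (lam k) (F e) = 0 :=
        st0_contract_vanish (lam k) (fun s hs => hlamS k s hs) _ hFe
      have h2 : F e = F e' + ∑ l, (ι K (f (a l)) * ι K (z l) + ι K (a l) * ι K (f (z l))) := by
        rw [heq, map_add, map_sum]
        exact congrArg _ (Finset.sum_congr rfl fun l _ => hF (a l) (z l))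
      have h3 : CliffordAlgebra.contractLeft (Q := (0 : QuadraticForm K W)) (lam k) (F e') = 0 :=
        st0_contract_vanish (lam k) (fun s hs => hlamS k s hs) _ (hFwedge e' he')
      have h4 : ∀ l, CliffordAlgebra.contractLeft (Q := (0 : QuadraticForm K W)) (lam k)
          (ι K (f (a l)) * ι K (z l) + ι K (a l) * ι K (f (z l)))
          = ι K ((if l = k then (1:K) else 0) • z l - lam k (f (z l)) • a l) := by
        intro l
        rw [map_add, st0_contract_ι_mul_ι, st0_contract_ι_mul_ι,
          hlamS k (z l) (hAS (hz l)), hlamS k (a l) (hAS (ha l)), hlamv k l,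
          zero_smul, zero_smul, sub_zero, zero_sub, ← map_add]
        congr 1
        abel
      rw [h2, map_add, map_sum, h3, zero_add, Finset.sum_congr rfl (fun l _ => h4 l),
        ← map_sum, ι_eq_zero_iff] at h1
      have h5 : ∑ l, ((if l = k then (1:K) else 0) • z l - lam k (f (z l)) • a l)
          = z k - ∑ l, lam k (f (z l)) • a l := by
        rw [Finset.sum_sub_distrib]
        congr 1
        simp [ite_smul]
      rw [h5, sub_eq_zero] at h1
      exact h1
    set C : Fin n → Fin n → K := fun l k => lam k (f (z l)) with hC
    have hsym : ∀ l k, C l k = C k l := by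
      intro l k
      have hfz : f (z l) = ∑ j, C j l • f (a j) := by
        conv_lhs => rw [hz' l]
        rw [map_sum]
        simp only [map_smul]
        rfl
      calc C l k = lam k (f (z l)) := rfl
        _ = ∑ j, C j l * lam k (f (a j)) := by
            rw [hfz, map_sum]; simp only [map_smul, smul_eq_mul]
        _ = C k l := by simp [hlamv]
    have hzero : (∑ k, ι K (a k) * ι K (z k)) = 0 := by
      have hterm : ∀ k, ι K (a k) * ι K (z k) = ∑ l, C l k • (ι K (a k) * ι K (a l)) := by
        intro k
        conv_lhs => rw [hz' k]
        rw [map_sum, Finset.mul_sum]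
        simp only [map_smul, mul_smul_comm]
        rfl
      rw [Finset.sum_congr rfl fun k _ => hterm k]
      exact st0_sum_zero C hsym a
    rw [heq, hzero, add_zero]
    exact he'
  have part1 : ∀ e ∈ wedge2 K A, (F e ∈ wedge2 K S ↔ e ∈ wedge2 K A') :=
    fun e he => ⟨hard e he, fun he' => hFwedge e he'⟩
  refine ⟨part1, ?_⟩
  intro t ev hev hind c hc i
  have h1 : (∑ i, c i • F (ev i)) = F (∑ i, c i • ev i) := by
    rw [map_sum]; simp only [map_smul]
  have h2 : (∑ i, c i • ev i) ∈ wedge2 K A :=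
    Submodule.sum_mem _ fun i _ => Submodule.smul_mem _ _ (hev i)
  exact hind c ((part1 _ h2).mp (by rwa [h1] at hc)) i

end
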